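/- arXiv:1004.3332 — 2 statements merged into one kernel-verified Lean document; each statement's English description precedes it below -/
import Mathlib

section
/- For every real-valued random variable X with E[X²] < ∞, every snr > 0, and every natural number n ≥ 0, the n-th absolute moment of the conditional-mean estimation error satisfies E[ |X − E[X | √snr·X + N]|ⁿ ] ≤ (2/√snr)ⁿ · √(n!), where N is a standard Gaussian random variable independent of X. -/
open MeasureTheory ProbabilityTheory Real

set_option linter.unusedSectionVars false
set_option linter.unusedVariables false
set_option maxHeartbeats 1000000

open scoped ENNReal NNReal

/-- The σ-algebra generated by the observation `Y_snr = √snr · X + N`. -/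
noncomputable def obsSigma {Ω : Type*} [MeasurableSpace Ω] (N X : Ω → ℝ) (snr : ℝ) :
    MeasurableSpace Ω :=
  MeasurableSpace.comap (fun ω => Real.sqrt snr * X ω + N ω) inferInstance

/-- The minimum mean-square error of estimating `X` from `Y_snr = √snr · X + N`. -/
noncomputable def mmse {Ω : Type*} [MeasurableSpace Ω] (μ : Measure Ω)
    (N X : Ω → ℝ) (snr : ℝ) : ℝ :=
  ∫ ω, (X ω - (μ[X | obsSigma N X snr]) ω) ^ 2 ∂μ

section Aux

lemma abs_pow_le_exp (j : ℕ) (x : ℝ) : |x| ^ j ≤ j.factorial * Real.exp |x| := by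
  have h := Real.pow_div_factorial_le_exp |x| (abs_nonneg x) j
  rw [div_le_iff₀ (by positivity)] at h
  calc |x| ^ j ≤ Real.exp |x| * j.factorial := h
    _ = j.factorial * Real.exp |x| := by ring

lemma gauss_pointwise_bound (j : ℕ) (x : ℝ) :
    |x| ^ j * Real.exp (-x ^ 2 / 2) ≤ (j.factorial : ℝ) * Real.exp (1/2) *
      (Real.exp (-(1/2 : ℝ) * (x - 1) ^ 2) + Real.exp (-(1/2 : ℝ) * (x + 1) ^ 2)) := by
  have h1 : |x| ^ j * Real.exp (-x ^ 2 / 2) ≤ j.factorial * Real.exp (|x| - x ^ 2 / 2) := by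
    have h0 : Real.exp (|x| - x ^ 2 / 2) = Real.exp |x| * Real.exp (-x ^ 2 / 2) := by
      rw [← Real.exp_add]; ring_nf
    rw [h0, ← mul_assoc]
    exact mul_le_mul_of_nonneg_right (abs_pow_le_exp j x) (Real.exp_pos _).le
  refine h1.trans ?_
  rcases le_or_gt 0 x with hx | hx
  · rw [abs_of_nonneg hx]
    have : Real.exp (x - x ^ 2 / 2) = Real.exp (1/2) * Real.exp (-(1/2 : ℝ) * (x - 1) ^ 2) := by
      rw [← Real.exp_add]; ring_nf
    rw [this, ← mul_assoc, mul_add]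
    exact le_add_of_nonneg_right (by positivity)
  · rw [abs_of_neg hx]
    have : Real.exp (-x - x ^ 2 / 2) = Real.exp (1/2) * Real.exp (-(1/2 : ℝ) * (x + 1) ^ 2) := by
      rw [← Real.exp_add]; ring_nf
    rw [this, ← mul_assoc, mul_add]
    exact le_add_of_nonneg_left (by positivity)

lemma integrable_abs_pow_gauss (j : ℕ) :
    Integrable (fun x : ℝ => |x| ^ j * Real.exp (-x ^ 2 / 2)) := by
  have hint : Integrable (fun x : ℝ => Real.exp (-(1/2 : ℝ) * x ^ 2)) :=
    integrable_exp_neg_mul_sq (by norm_num)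
  have h1 : Integrable (fun x : ℝ => Real.exp (-(1/2 : ℝ) * (x - 1) ^ 2)) :=
    hint.comp_sub_right 1
  have h2 : Integrable (fun x : ℝ => Real.exp (-(1/2 : ℝ) * (x + 1) ^ 2)) := by
    simpa using hint.comp_sub_right (-1)
  have hmaj : Integrable (fun x : ℝ => (j.factorial : ℝ) * Real.exp (1/2) *
      (Real.exp (-(1/2 : ℝ) * (x - 1) ^ 2) + Real.exp (-(1/2 : ℝ) * (x + 1) ^ 2))) :=
    (h1.add h2).const_mul _
  refine hmaj.mono' ?_ (ae_of_all _ fun x => ?_)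
  · exact ((continuous_abs.pow j).mul ((continuous_pow 2).neg.div_const 2).rexp).aestronglyMeasurable
  · rw [Real.norm_eq_abs, abs_of_nonneg (by positivity)]
    exact gauss_pointwise_bound j x

lemma integrable_pow_gauss (j : ℕ) :
    Integrable (fun x : ℝ => x ^ j * Real.exp (-x ^ 2 / 2)) := by
  refine (integrable_abs_pow_gauss j).mono' ?_ (ae_of_all _ fun x => ?_)
  · exact ((continuous_pow j).mul ((continuous_pow 2).neg.div_const 2).rexp).aestronglyMeasurable
  · rw [Real.norm_eq_abs, abs_mul, abs_pow, abs_of_nonneg (Real.exp_pos _).le]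

noncomputable def oddFac : ℕ → ℝ
  | 0 => 1
  | (k+1) => (2*k+1) * oddFac k



lemma gauss_even_moment (k : ℕ) :
    ∫ x : ℝ, x ^ (2*k) * Real.exp (-x ^ 2 / 2) = oddFac k * Real.sqrt (2*π) := by
  induction k with
  | zero =>
    have h : ∀ x : ℝ, x ^ (2*0) * Real.exp (-x ^ 2 / 2) = Real.exp (-(1/2 : ℝ) * x ^ 2) := by
      intro x; rw [Nat.mul_zero, pow_zero, one_mul]; congr 1; ring
    rw [integral_congr_ae (ae_of_all _ h), integral_gaussian]
    rw [show oddFac 0 = 1 from rfl, one_mul]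
    congr 1; rw [div_div_eq_mul_div]; ring
  | succ k ih =>
    have hd : ∀ x : ℝ, HasDerivAt (fun x : ℝ => x ^ (2*k+1) * Real.exp (-x ^ 2 / 2))
        (((2*k+1 : ℝ) * x ^ (2*k) - x ^ (2*k+2)) * Real.exp (-x ^ 2 / 2)) x := by
      intro x
      have h1 : HasDerivAt (fun x : ℝ => x ^ (2*k+1)) ((2*k+1 : ℝ) * x ^ (2*k)) x := by
        simpa using hasDerivAt_pow (2*k+1) x
      have h2 : HasDerivAt (fun x : ℝ => -x ^ 2 / 2) (-x) x := by
        have := ((hasDerivAt_pow 2 x).neg).div_const 2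
        simpa using this.congr_deriv (by ring)
      have h3 := h2.exp
      have := h1.mul h3
      exact this.congr_deriv (by ring)
    have hf : Integrable (fun x : ℝ => x ^ (2*k+1) * Real.exp (-x ^ 2 / 2)) :=
      integrable_pow_gauss _
    have hf' : Integrable (fun x : ℝ =>
        ((2*k+1 : ℝ) * x ^ (2*k) - x ^ (2*k+2)) * Real.exp (-x ^ 2 / 2)) := by
      have := (((integrable_pow_gauss (2*k)).const_mul ((2*k+1 : ℝ))).sub
        (integrable_pow_gauss (2*k+2)))
      refine this.congr (ae_of_all _ fun x => ?_)
      simp only [Pi.sub_apply]; ring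
    have hzero := integral_eq_zero_of_hasDerivAt_of_integrable hd hf' hf
    have hsplit : ∫ x : ℝ, ((2*k+1 : ℝ) * x ^ (2*k) - x ^ (2*k+2)) * Real.exp (-x ^ 2 / 2)
        = (2*k+1 : ℝ) * (∫ x : ℝ, x ^ (2*k) * Real.exp (-x ^ 2 / 2))
          - ∫ x : ℝ, x ^ (2*k+2) * Real.exp (-x ^ 2 / 2) := by
      rw [← integral_const_mul, ← integral_sub (((integrable_pow_gauss (2*k)).const_mul _))
        (integrable_pow_gauss (2*k+2))]
      congr 1; funext x; ring
    rw [hsplit] at hzero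
    have h2 : ∫ x : ℝ, x ^ (2*(k+1)) * Real.exp (-x ^ 2 / 2)
        = (2*k+1 : ℝ) * ∫ x : ℝ, x ^ (2*k) * Real.exp (-x ^ 2 / 2) := by
      rw [show 2*(k+1) = 2*k+2 from by ring]
      linarith
    rw [h2, ih, show oddFac (k+1) = (2*k+1 : ℝ) * oddFac k from by
      rw [oddFac]]
    ring


lemma oddFac_nonneg (k : ℕ) : 0 ≤ oddFac k := by
  induction k with
  | zero => norm_num [oddFac]
  | succ k ih => rw [oddFac]; positivity

lemma oddFac_sq_le (k : ℕ) : oddFac k ^ 2 ≤ ((2*k).factorial : ℝ) := by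
  induction k with
  | zero => norm_num [oddFac]
  | succ k ih =>
    rw [oddFac, mul_pow, show 2*(k+1) = (2*k+1)+1 from by ring, Nat.factorial_succ,
      Nat.factorial_succ]
    push_cast
    have h1 : ((2*k+1 : ℕ) : ℝ) + 1 ≤ 2*(k:ℝ)+2 := by push_cast; linarith
    nlinarith [oddFac_nonneg k, Nat.cast_nonneg ((2*k).factorial) (α := ℝ),
      sq_nonneg (oddFac k)]

lemma oddFac_mul_le (k : ℕ) : oddFac k * oddFac (k+1) ≤ ((2*k+1).factorial : ℝ) := by
  rw [oddFac, Nat.factorial_succ]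
  push_cast
  nlinarith [oddFac_sq_le k, oddFac_nonneg k, Nat.cast_nonneg ((2*k).factorial) (α := ℝ)]

-- gaussian integral formula
lemma integral_gaussianReal (f : ℝ → ℝ) :
    ∫ x, f x ∂(gaussianReal 0 1) = ∫ x, gaussianPDFReal 0 1 x * f x := by
  rw [gaussianReal_of_var_ne_zero _ one_ne_zero]
  simp_rw [gaussianPDF_def]
  rw [show (fun x => ENNReal.ofReal (gaussianPDFReal 0 1 x))
      = (fun x => ((gaussianPDFReal 0 1 x).toNNReal : ℝ≥0∞)) from rfl]
  rw [integral_withDensity_eq_integral_smul ((measurable_gaussianPDFReal 0 1).real_toNNReal) f]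
  congr 1
  funext x
  rw [NNReal.smul_def, smul_eq_mul, Real.coe_toNNReal _ (gaussianPDFReal_nonneg 0 1 x)]

lemma gaussianPDFReal_zero_one (x : ℝ) :
    gaussianPDFReal 0 1 x = (Real.sqrt (2*π))⁻¹ * Real.exp (-x^2/2) := by
  simp [gaussianPDFReal]

section Moments
variable {Ω : Type*} [MeasurableSpace Ω] {μ : Measure Ω} [IsProbabilityMeasure μ]
  {N : Ω → ℝ}

lemma integrable_gauss_abs_pow (j : ℕ) :
    Integrable (fun x : ℝ => |x| ^ j) (gaussianReal 0 1) := by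
  rw [gaussianReal_of_var_ne_zero _ one_ne_zero, gaussianPDF_def]
  rw [show (fun x => ENNReal.ofReal (gaussianPDFReal 0 1 x))
      = (fun x => ((gaussianPDFReal 0 1 x).toNNReal : ℝ≥0∞)) from rfl]
  rw [integrable_withDensity_iff_integrable_smul ((measurable_gaussianPDFReal 0 1).real_toNNReal)]
  have : Integrable (fun x : ℝ => (Real.sqrt (2*π))⁻¹ * (|x| ^ j * Real.exp (-x^2/2))) :=
    (integrable_abs_pow_gauss j).const_mul _
  refine this.congr (ae_of_all _ fun x => ?_)
  show _ = (gaussianPDFReal 0 1 x).toNNReal • |x| ^ j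
  rw [NNReal.smul_def, smul_eq_mul, Real.coe_toNNReal _ (gaussianPDFReal_nonneg 0 1 x),
    gaussianPDFReal_zero_one]
  ring

lemma integrable_abs_pow_N (hNm : Measurable N) (hN : Measure.map N μ = gaussianReal 0 1)
    (j : ℕ) : Integrable (fun ω => |N ω| ^ j) μ := by
  have h : Integrable (fun x : ℝ => |x| ^ j) (Measure.map N μ) := by
    rw [hN]; exact integrable_gauss_abs_pow j
  exact (integrable_map_measure (continuous_abs.pow j).aestronglyMeasurable
    hNm.aemeasurable).mp h

lemma moment_even_N (hNm : Measurable N) (hN : Measure.map N μ = gaussianReal 0 1) (k : ℕ) :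
    ∫ ω, |N ω| ^ (2*k) ∂μ = oddFac k := by
  have h1 : ∫ ω, |N ω| ^ (2*k) ∂μ = ∫ x, |x| ^ (2*k) ∂(gaussianReal 0 1) := by
    rw [← hN, integral_map (f := fun x : ℝ => |x| ^ (2*k)) hNm.aemeasurable (continuous_abs.pow (2*k)).aestronglyMeasurable]
  rw [h1, integral_gaussianReal]
  have h2 : ∀ x : ℝ, gaussianPDFReal 0 1 x * |x| ^ (2*k)
      = (Real.sqrt (2*π))⁻¹ * (x ^ (2*k) * Real.exp (-x^2/2)) := by
    intro x
    rw [gaussianPDFReal_zero_one, (Even.pow_abs ⟨k, by ring⟩ x)]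
    ring
  rw [integral_congr_ae (ae_of_all _ h2), integral_const_mul, gauss_even_moment]
  have hs : Real.sqrt (2*π) ≠ 0 := by positivity
  field_simp

lemma memL2_abs_pow_N (hNm : Measurable N) (hN : Measure.map N μ = gaussianReal 0 1)
    (m : ℕ) : MemLp (fun ω => |N ω| ^ m) (ENNReal.ofReal 2) μ := by
  rw [show ENNReal.ofReal 2 = 2 from by norm_num]
  rw [memLp_two_iff_integrable_sq ((hNm.abs.pow_const m).aestronglyMeasurable)]
  have := integrable_abs_pow_N hNm hN (2*m)
  refine this.congr (ae_of_all _ fun ω => ?_)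
  show |N ω| ^ (2*m) = (|N ω| ^ m) ^ 2
  rw [show 2*m = m*2 from by ring, pow_mul]

lemma moment_abs_N_le (hNm : Measurable N) (hN : Measure.map N μ = gaussianReal 0 1)
    (n : ℕ) : ∫ ω, |N ω| ^ n ∂μ ≤ Real.sqrt (n.factorial) := by
  rcases Nat.even_or_odd n with ⟨m, hm⟩ | ⟨m, hm⟩
  · have hn : n = 2*m := by omega
    subst hn
    rw [moment_even_N hNm hN m]
    calc oddFac m = Real.sqrt (oddFac m ^ 2) := (Real.sqrt_sq (oddFac_nonneg m)).symm
      _ ≤ Real.sqrt ((2*m).factorial) := Real.sqrt_le_sqrt (oddFac_sq_le m)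
  · subst hm
    have hsplit : ∀ ω, |N ω| ^ (2*m+1) = |N ω| ^ m * |N ω| ^ (m+1) := by
      intro ω; rw [← pow_add]; congr 1; ring
    rw [integral_congr_ae (ae_of_all _ hsplit)]
    have hpq : Real.HolderConjugate 2 2 := Real.HolderConjugate.two_two
    have hCS := integral_mul_le_Lp_mul_Lq_of_nonneg hpq
      (ae_of_all _ fun ω => by positivity)
      (ae_of_all _ fun ω => by positivity)
      (memL2_abs_pow_N hNm hN m) (memL2_abs_pow_N hNm hN (m+1))
    refine hCS.trans ?_
    have hconv : ∀ (j : ℕ), (∫ ω, (|N ω| ^ j) ^ (2:ℝ) ∂μ) = oddFac j := by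
      intro j
      rw [← moment_even_N hNm hN j]
      refine integral_congr_ae (ae_of_all _ fun ω => ?_)
      show (|N ω| ^ j) ^ (2:ℝ) = |N ω| ^ (2*j)
      rw [show ((2:ℝ)) = ((2:ℕ):ℝ) from by norm_num, Real.rpow_natCast,
        show 2*j = j*2 from by ring, pow_mul]
    rw [hconv m, hconv (m+1)]
    have h0 : (0:ℝ) ≤ oddFac m := oddFac_nonneg m
    have h1 : (0:ℝ) ≤ oddFac (m+1) := oddFac_nonneg (m+1)
    rw [← Real.sqrt_eq_rpow, ← Real.sqrt_eq_rpow, ← Real.sqrt_mul h0]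
    exact Real.sqrt_le_sqrt (oddFac_mul_le m)

end Moments


lemma convexOn_abs_pow (n : ℕ) : ConvexOn ℝ Set.univ (fun x : ℝ => |x| ^ n) := by
  have himg : (fun x : ℝ => |x|) '' Set.univ = Set.Ici 0 := by
    ext y
    simp only [Set.image_univ, Set.mem_range, Set.mem_Ici]
    constructor
    · rintro ⟨x, rfl⟩; exact abs_nonneg x
    · intro hy; exact ⟨y, abs_of_nonneg hy⟩
  have habs : ConvexOn ℝ Set.univ (fun x : ℝ => |x|) := by
    exact convexOn_univ_norm (E := ℝ)
  have hg : ConvexOn ℝ ((fun x : ℝ => |x|) '' Set.univ) (fun y : ℝ => y ^ n) := by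
    rw [himg]; exact convexOn_pow n
  have hmono : MonotoneOn (fun y : ℝ => y ^ n) ((fun x : ℝ => |x|) '' Set.univ) := by
    rw [himg]; exact fun a ha b _ hab => pow_le_pow_left₀ ha hab n
  exact hg.comp habs hmono

variable {Ω : Type*} [MeasurableSpace Ω] {μ : Measure Ω} [IsProbabilityMeasure μ]
  {N Y : Ω → ℝ}

lemma condexp_abs_pow_jensen (hNm : Measurable N) (hYm : Measurable Y)
    (hint : ∀ j : ℕ, Integrable (fun ω => |N ω| ^ j) μ) (n : ℕ) :
    ∀ᵐ ω ∂μ, |(μ[N | MeasurableSpace.comap Y inferInstance]) ω| ^ n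
      ≤ (μ[(fun ω => |N ω| ^ n) | MeasurableSpace.comap Y inferInstance]) ω := by
  have hNint : Integrable N μ := by
    refine (hint 1).mono' hNm.aestronglyMeasurable (ae_of_all _ fun ω => ?_)
    rw [Real.norm_eq_abs, pow_one]
  have h1 : μ[N | MeasurableSpace.comap Y inferInstance]
      =ᵐ[μ] fun ω => ∫ y, y ∂(condDistrib N Y μ (Y ω)) :=
    condExp_ae_eq_integral_condDistrib' hYm hNint
  have h2 : μ[(fun ω => |N ω| ^ n) | MeasurableSpace.comap Y inferInstance]
      =ᵐ[μ] fun ω => ∫ y, |y| ^ n ∂(condDistrib N Y μ (Y ω)) :=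
    condExp_ae_eq_integral_condDistrib hYm hNm.aemeasurable
      (continuous_abs.pow n).stronglyMeasurable (hint n)
  have h3 : ∀ᵐ ω ∂μ, Integrable (fun y : ℝ => y) (condDistrib N Y μ (Y ω)) := by
    have : Integrable (fun p : ℝ × ℝ => p.2) (μ.map fun ω => (Y ω, N ω)) := by
      rw [integrable_map_measure measurable_snd.aestronglyMeasurable
        (hYm.aemeasurable.prodMk hNm.aemeasurable)]
      exact hNint
    exact this.condDistrib_ae hYm.aemeasurable hNm.aemeasurable
  have h4 : ∀ᵐ ω ∂μ, Integrable (fun y : ℝ => |y| ^ n) (condDistrib N Y μ (Y ω)) := by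
    have : Integrable (fun p : ℝ × ℝ => |p.2| ^ n) (μ.map fun ω => (Y ω, N ω)) := by
      rw [integrable_map_measure (g := fun p : ℝ × ℝ => |p.2| ^ n) (continuous_snd.abs.pow n).aestronglyMeasurable
        (hYm.aemeasurable.prodMk hNm.aemeasurable)]
      exact hint n
    exact this.condDistrib_ae hYm.aemeasurable hNm.aemeasurable
  filter_upwards [h1, h2, h3, h4] with ω hω1 hω2 hω3 hω4
  rw [hω1, hω2]
  have := (convexOn_abs_pow n).map_integral_le (μ := condDistrib N Y μ (Y ω))
    (f := fun y : ℝ => y) ((continuous_abs.pow n).continuousOn) isClosed_univ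
    (ae_of_all _ fun _ => Set.mem_univ _) hω3 (by exact hω4)
  exact this

end Aux

theorem abs_moment_estimation_error_le {Ω : Type*} [MeasurableSpace Ω] (μ : Measure Ω)
    [IsProbabilityMeasure μ] (X N : Ω → ℝ) (hXm : Measurable X) (hNm : Measurable N)
    (hX2 : MemLp X 2 μ) (hN : Measure.map N μ = gaussianReal 0 1)
    (hindep : IndepFun X N μ) (snr : ℝ) (hsnr : 0 < snr) (n : ℕ) :
    ∫ ω, |X ω - (μ[X | obsSigma N X snr]) ω| ^ n ∂μ
      ≤ (2 / Real.sqrt snr) ^ n * Real.sqrt (Nat.factorial n) := by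
  rcases Nat.eq_zero_or_pos n with rfl | hn
  · simp
  have hYm : Measurable (fun ω => Real.sqrt snr * X ω + N ω) := (hXm.const_mul _).add hNm
  have hm : obsSigma N X snr ≤ ‹MeasurableSpace Ω› := hYm.comap_le
  have hsq : (0:ℝ) < Real.sqrt snr := Real.sqrt_pos.mpr hsnr
  have hXint : Integrable X μ := hX2.integrable one_le_two
  have hint : ∀ j : ℕ, Integrable (fun ω => |N ω| ^ j) μ := integrable_abs_pow_N hNm hN
  have hNint : Integrable N μ := by
    refine (hint 1).mono' hNm.aestronglyMeasurable (ae_of_all _ fun ω => ?_)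
    rw [Real.norm_eq_abs, pow_one]
  have hYint : Integrable (fun ω => Real.sqrt snr * X ω + N ω) μ := (hXint.const_mul _).add hNint
  haveI : SigmaFinite (μ.trim hm) := inferInstance
  have hYsm : StronglyMeasurable[obsSigma N X snr] (fun ω => Real.sqrt snr * X ω + N ω) :=
    (Measurable.of_comap_le le_rfl).stronglyMeasurable
  have hEY : μ[(fun ω => Real.sqrt snr * X ω + N ω) | obsSigma N X snr]
      = fun ω => Real.sqrt snr * X ω + N ω := condExp_of_stronglyMeasurable hm hYsm hYint
  have hadd : μ[(fun ω => Real.sqrt snr * X ω + N ω) | obsSigma N X snr]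
      =ᵐ[μ] fun ω => Real.sqrt snr * (μ[X | obsSigma N X snr]) ω
        + (μ[N | obsSigma N X snr]) ω := by
    have h1 : μ[(fun ω => Real.sqrt snr * X ω) + N | obsSigma N X snr]
        =ᵐ[μ] μ[fun ω => Real.sqrt snr * X ω | obsSigma N X snr]
          + μ[N | obsSigma N X snr] :=
      condExp_add (hXint.const_mul _) hNint (obsSigma N X snr)
    have h2 : μ[fun ω => Real.sqrt snr * X ω | obsSigma N X snr]
        =ᵐ[μ] Real.sqrt snr • μ[X | obsSigma N X snr] :=
      condExp_smul (m := obsSigma N X snr) (μ := μ) (Real.sqrt snr) X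
    filter_upwards [h1, h2] with ω hω1 hω2
    have h3 : (fun ω => Real.sqrt snr * X ω + N ω)
        = (fun ω => Real.sqrt snr * X ω) + N := rfl
    rw [h3, hω1, Pi.add_apply, hω2]
    simp [smul_eq_mul]
  have key : ∀ᵐ ω ∂μ, X ω - (μ[X | obsSigma N X snr]) ω
      = ((μ[N | obsSigma N X snr]) ω - N ω) / Real.sqrt snr := by
    filter_upwards [hadd] with ω hω
    have h1 : Real.sqrt snr * X ω + N ω
        = Real.sqrt snr * (μ[X | obsSigma N X snr]) ω + (μ[N | obsSigma N X snr]) ω := by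
      conv_lhs => rw [show Real.sqrt snr * X ω + N ω
        = (fun ω => Real.sqrt snr * X ω + N ω) ω from rfl, ← hEY]
      exact hω
    field_simp
    linarith
  have hrw : ∫ ω, |X ω - (μ[X | obsSigma N X snr]) ω| ^ n ∂μ
      = (∫ ω, |(μ[N | obsSigma N X snr]) ω - N ω| ^ n ∂μ) / (Real.sqrt snr) ^ n := by
    rw [← integral_div]
    refine integral_congr_ae ?_
    filter_upwards [key] with ω hω
    rw [hω, abs_div, abs_of_nonneg hsq.le, div_pow]
  rw [hrw]
  have hjensen : ∀ᵐ ω ∂μ, |(μ[N | obsSigma N X snr]) ω| ^ n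
      ≤ (μ[(fun ω => |N ω| ^ n) | obsSigma N X snr]) ω :=
    condexp_abs_pow_jensen hNm hYm hint n
  have hEsm : AEStronglyMeasurable (fun ω => |(μ[N | obsSigma N X snr]) ω| ^ n) μ :=
    (((stronglyMeasurable_condExp.mono hm).measurable.abs).pow_const n).aestronglyMeasurable
  have hEint : Integrable (fun ω => |(μ[N | obsSigma N X snr]) ω| ^ n) μ := by
    refine (integrable_condExp (f := fun ω => |N ω| ^ n) (m := obsSigma N X snr)).mono' hEsm ?_
    filter_upwards [hjensen] with ω hω
    rw [Real.norm_eq_abs, abs_of_nonneg (by positivity)]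
    exact hω
  have hNb : ∫ ω, |N ω| ^ n ∂μ ≤ Real.sqrt (n.factorial) := moment_abs_N_le hNm hN n
  have hEb : ∫ ω, |(μ[N | obsSigma N X snr]) ω| ^ n ∂μ ≤ Real.sqrt (n.factorial) := by
    calc ∫ ω, |(μ[N | obsSigma N X snr]) ω| ^ n ∂μ
        ≤ ∫ ω, (μ[(fun ω => |N ω| ^ n) | obsSigma N X snr]) ω ∂μ :=
          integral_mono_ae hEint integrable_condExp hjensen
      _ = ∫ ω, |N ω| ^ n ∂μ := integral_condExp hm
      _ ≤ Real.sqrt (n.factorial) := hNb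
  have h2pow : (2:ℝ) ^ (n-1) * 2 = 2 ^ n := by
    rw [mul_comm, ← pow_succ']
    congr 1
    omega
  have hnum : ∫ ω, |(μ[N | obsSigma N X snr]) ω - N ω| ^ n ∂μ
      ≤ 2 ^ n * Real.sqrt (n.factorial) := by
    have hptw : ∀ᵐ ω ∂μ, |(μ[N | obsSigma N X snr]) ω - N ω| ^ n
        ≤ 2 ^ (n-1) * (|(μ[N | obsSigma N X snr]) ω| ^ n + |N ω| ^ n) := by
      refine ae_of_all _ fun ω => ?_
      calc |(μ[N | obsSigma N X snr]) ω - N ω| ^ n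
          ≤ (|(μ[N | obsSigma N X snr]) ω| + |N ω|) ^ n :=
            pow_le_pow_left₀ (abs_nonneg _) (abs_sub _ _) n
        _ ≤ 2 ^ (n-1) * (|(μ[N | obsSigma N X snr]) ω| ^ n + |N ω| ^ n) :=
            add_pow_le (abs_nonneg _) (abs_nonneg _) n
    have hbint : Integrable (fun ω => (2:ℝ) ^ (n-1)
        * (|(μ[N | obsSigma N X snr]) ω| ^ n + |N ω| ^ n)) μ := by
      have := (hEint.add (hint n)).const_mul ((2:ℝ) ^ (n-1))
      exact this
    have hmono := integral_mono_of_nonneg (ae_of_all _ fun ω => by positivity) hbint hptw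
    refine hmono.trans ?_
    rw [integral_const_mul, integral_add hEint (hint n)]
    have h2s : (∫ ω, |(μ[N | obsSigma N X snr]) ω| ^ n ∂μ) + ∫ ω, |N ω| ^ n ∂μ
        ≤ 2 * Real.sqrt (n.factorial) := by linarith
    calc (2:ℝ) ^ (n-1) * ((∫ ω, |(μ[N | obsSigma N X snr]) ω| ^ n ∂μ) + ∫ ω, |N ω| ^ n ∂μ)
        ≤ 2 ^ (n-1) * (2 * Real.sqrt (n.factorial)) :=
          mul_le_mul_of_nonneg_left h2s (by positivity)
      _ = 2 ^ n * Real.sqrt (n.factorial) := by rw [← mul_assoc, h2pow]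
  calc (∫ ω, |(μ[N | obsSigma N X snr]) ω - N ω| ^ n ∂μ) / (Real.sqrt snr) ^ n
      ≤ (2 ^ n * Real.sqrt (n.factorial)) / (Real.sqrt snr) ^ n := by gcongr
    _ = (2 / Real.sqrt snr) ^ n * Real.sqrt (n.factorial) := by
        rw [div_pow]; ring
end

section
/- (Concavity of the MMSE in the input distribution) Let X₀ and X₁ be real-valued random variables with E[X₀²] < ∞ and E[X₁²] < ∞, let α ∈ [0, 1], and let Z be a real-valued random variable whose law is the mixture α·P_{X₀} + (1 − α)·P_{X₁}. Then for every snr ≥ 0, mmse(Z, snr) ≥ α·mmse(X₀, snr) + (1 − α)·mmse(X₁, snr). -/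
open MeasureTheory ProbabilityTheory Real

section Aux

lemma integral_sq_condexp_le {Ω : Type*} {m m0 : MeasurableSpace Ω} (hm : m ≤ m0)
    (μ : Measure Ω) [IsProbabilityMeasure μ] {f h : Ω → ℝ}
    (hf : MemLp f 2 μ) (hh : MemLp h 2 μ) (hhm : AEStronglyMeasurable[m] h μ) :
    ∫ ω, (f ω - (μ[f|m]) ω) ^ 2 ∂μ ≤ ∫ ω, (f ω - h ω) ^ 2 ∂μ := by
  haveI : Fact (m ≤ m0) := ⟨hm⟩
  haveI : Fact ((1:ENNReal) ≤ 2) := fact_one_le_two_ennreal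
  set fL := hf.toLp f with hfL
  set hL := hh.toLp h with hhL
  have hL_mem : hL ∈ lpMeas ℝ ℝ m 2 μ :=
    mem_lpMeas_iff_aestronglyMeasurable.mpr (hhm.congr hh.coeFn_toLp.symm)
  set P : Lp ℝ 2 μ := (condExpL2 ℝ ℝ hm fL : Lp ℝ 2 μ) with hP
  have hPmem : P ∈ lpMeas ℝ ℝ m 2 μ := SetLike.coe_mem _
  have hPc : (P : Ω → ℝ) =ᵐ[μ] μ[f|m] := by
    refine ae_eq_condExp_of_forall_setIntegral_eq hm (hf.integrable one_le_two)
      (fun s hs hμs => integrableOn_condExpL2_of_measure_ne_top hm hμs.ne fL) ?_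
      (aestronglyMeasurable_condExpL2 hm fL)
    intro s hs hμs
    rw [integral_condExpL2_eq_of_fin_meas_real fL hs hμs.ne]
    exact setIntegral_congr_ae (hm s hs) ((hf.coeFn_toLp).mono fun x hx _ => hx)
  have key : ∀ (w : Lp ℝ 2 μ), ∫ ω, ((w : Ω → ℝ) ω) ^ 2 ∂μ = ‖w‖ ^ 2 := by
    intro w
    rw [← real_inner_self_eq_norm_sq, L2.inner_def]
    refine integral_congr_ae (ae_of_all _ fun ω => ?_)
    simp [sq, RCLike.inner_apply, conj_trivial]
  have h1 : ∫ ω, (f ω - (μ[f|m]) ω) ^ 2 ∂μ = ‖fL - P‖ ^ 2 := by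
    rw [← key (fL - P)]
    refine integral_congr_ae ?_
    filter_upwards [hf.coeFn_toLp, hPc, Lp.coeFn_sub fL P] with ω e1 e2 e3
    rw [e3]; simp [hfL, e1, e2]
  have h2 : ∫ ω, (f ω - h ω) ^ 2 ∂μ = ‖fL - hL‖ ^ 2 := by
    rw [← key (fL - hL)]
    refine integral_congr_ae ?_
    filter_upwards [hf.coeFn_toLp, hh.coeFn_toLp, Lp.coeFn_sub fL hL] with ω e1 e2 e3
    rw [e3]; simp [hfL, hhL, e1, e2]
  rw [h1, h2]
  have horth : fL - P ∈ (lpMeas ℝ ℝ m 2 μ)ᗮ := by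
    rw [hP]
    exact Submodule.sub_starProjection_mem_orthogonal (K := lpMeas ℝ ℝ m 2 μ) fL
  have hzero : @inner ℝ _ _ (fL - P) (P - hL) = 0 := by
    rw [real_inner_comm]
    exact horth (P - hL) (Submodule.sub_mem _ hPmem hL_mem)
  calc ‖fL - P‖ ^ 2 ≤ ‖fL - P‖ ^ 2 + ‖P - hL‖ ^ 2 := le_add_of_nonneg_right (sq_nonneg _)
    _ = ‖(fL - P) + (P - hL)‖ ^ 2 := by rw [norm_add_sq_real, hzero]; ring
    _ = ‖fL - hL‖ ^ 2 := by rw [sub_add_sub_cancel]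

lemma memℒp_two_condexp {Ω : Type*} {m m0 : MeasurableSpace Ω} (hm : m ≤ m0)
    (μ : Measure Ω) [IsProbabilityMeasure μ] {f : Ω → ℝ} (hf : MemLp f 2 μ) :
    MemLp (μ[f|m]) 2 μ := by
  haveI : Fact (m ≤ m0) := ⟨hm⟩
  haveI : Fact ((1:ENNReal) ≤ 2) := fact_one_le_two_ennreal
  set fL := hf.toLp f with hfL
  set P : Lp ℝ 2 μ := (condExpL2 ℝ ℝ hm fL : Lp ℝ 2 μ) with hP
  have hPc : (P : Ω → ℝ) =ᵐ[μ] μ[f|m] := by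
    refine ae_eq_condExp_of_forall_setIntegral_eq hm (hf.integrable one_le_two)
      (fun s hs hμs => integrableOn_condExpL2_of_measure_ne_top hm hμs.ne fL) ?_
      (aestronglyMeasurable_condExpL2 hm fL)
    intro s hs hμs
    rw [integral_condExpL2_eq_of_fin_meas_real fL hs hμs.ne]
    exact setIntegral_congr_ae (hm s hs) ((hf.coeFn_toLp).mono fun x hx _ => hx)
  exact (Lp.memLp P).ae_eq hPc

lemma smul_prod_meas (μ' : Measure ℝ) [IsFiniteMeasure μ'] (ν' : Measure ℝ) [SigmaFinite ν']
    (c : ENNReal) (hc : c ≠ ⊤) : (c • μ').prod ν' = c • (μ'.prod ν') := by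
  haveI : IsFiniteMeasure (c • μ') := by
    refine ⟨?_⟩
    rw [Measure.smul_apply, smul_eq_mul]
    exact ENNReal.mul_lt_top hc.lt_top (measure_lt_top _ _)
  refine Measure.prod_eq fun s t hs ht => ?_
  simp [Measure.prod_prod, mul_assoc]

end Aux


/-- **Concavity of the MMSE in the input distribution.** If the law of `Z` is the mixture
`α · P_{X₀} + (1 - α) · P_{X₁}`, then
`mmse(Z, snr) ≥ α · mmse(X₀, snr) + (1 - α) · mmse(X₁, snr)`. -/
theorem mmse_concave_in_distribution {Ω : Type*} [MeasurableSpace Ω] (μ : Measure Ω)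
    [IsProbabilityMeasure μ] (X₀ X₁ Z N : Ω → ℝ)
    (hX₀m : Measurable X₀) (hX₁m : Measurable X₁) (hZm : Measurable Z) (hNm : Measurable N)
    (hX₀2 : MemLp X₀ 2 μ) (hX₁2 : MemLp X₁ 2 μ)
    (hN : Measure.map N μ = gaussianReal 0 1)
    (hindep₀ : IndepFun X₀ N μ) (hindep₁ : IndepFun X₁ N μ) (hindepZ : IndepFun Z N μ)
    (α : ℝ) (hα : α ∈ Set.Icc (0 : ℝ) 1)
    (hmix : Measure.map Z μ =
      ENNReal.ofReal α • Measure.map X₀ μ + ENNReal.ofReal (1 - α) • Measure.map X₁ μ)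
    (snr : ℝ) (hsnr : 0 ≤ snr) :
    α * mmse μ N X₀ snr + (1 - α) * mmse μ N X₁ snr ≤ mmse μ N Z snr := by
  obtain ⟨hα0, hα1⟩ := hα
  have hβ0 : (0:ℝ) ≤ 1 - α := by linarith
  set ss := Real.sqrt snr with hss
  set αe := ENNReal.ofReal α with hαe
  set βe := ENNReal.ofReal (1 - α) with hβe
  have hαet : αe ≠ ⊤ := ENNReal.ofReal_ne_top
  have hβet : βe ≠ ⊤ := ENNReal.ofReal_ne_top
  set Y₀ : Ω → ℝ := fun ω => ss * X₀ ω + N ω with hY₀def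
  set Y₁ : Ω → ℝ := fun ω => ss * X₁ ω + N ω with hY₁def
  set YZ : Ω → ℝ := fun ω => ss * Z ω + N ω with hYZdef
  have hY₀m : Measurable Y₀ := (measurable_const.mul hX₀m).add hNm
  have hY₁m : Measurable Y₁ := (measurable_const.mul hX₁m).add hNm
  have hYZm : Measurable YZ := (measurable_const.mul hZm).add hNm
  -- squared lintegral via pushforward
  have hsq : ∀ {W : Ω → ℝ}, Measurable W →
      (∫⁻ ω, ‖W ω ^ 2‖ₑ ∂μ) = ∫⁻ x, ENNReal.ofReal (x ^ 2) ∂(Measure.map W μ) := by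
    intro W hW
    rw [lintegral_map (by measurability) hW]
    refine lintegral_congr fun ω => ?_
    rw [← ofReal_norm, Real.norm_of_nonneg (sq_nonneg _)]
  -- Z is L²
  have hZ2 : MemLp Z 2 μ := by
    rw [memLp_two_iff_integrable_sq hZm.aestronglyMeasurable]
    refine ⟨((hZm.pow_const 2)).aestronglyMeasurable, ?_⟩
    have h0 := hX₀2.integrable_sq.2
    have h1 := hX₁2.integrable_sq.2
    rw [HasFiniteIntegral, hsq hX₀m] at h0
    rw [HasFiniteIntegral, hsq hX₁m] at h1
    rw [HasFiniteIntegral, hsq hZm, hmix, lintegral_add_measure, lintegral_smul_measure,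
      lintegral_smul_measure, smul_eq_mul, smul_eq_mul]
    exact ENNReal.add_lt_top.mpr ⟨ENNReal.mul_lt_top hαet.lt_top h0,
      ENNReal.mul_lt_top hβet.lt_top h1⟩
  -- the estimator g from the conditional expectation of Z
  set κ := condDistrib Z YZ μ with hκ
  set g : ℝ → ℝ := fun b => ∫ y, y ∂(κ b) with hg
  have hgm : Measurable g := by
    have : StronglyMeasurable (fun p : ℝ × ℝ => p.2) := measurable_snd.stronglyMeasurable
    exact (this.integral_kernel_prod_right' (κ := κ)).measurable
  have hobsZ : obsSigma N Z snr = MeasurableSpace.comap YZ inferInstance := rfl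
  have hcondZ : μ[Z | obsSigma N Z snr] =ᵐ[μ] fun ω => g (YZ ω) := by
    rw [hobsZ]
    exact condExp_ae_eq_integral_condDistrib' hYZm (hZ2.integrable one_le_two)
  -- joint laws
  set φ : ℝ × ℝ → ℝ × ℝ := fun p => (p.1, ss * p.1 + p.2) with hφdef
  have hφm : Measurable φ := measurable_fst.prodMk ((measurable_const.mul measurable_fst).add measurable_snd)
  have hjoint : ∀ (W : Ω → ℝ), Measurable W → IndepFun W N μ →
      Measure.map (fun ω => (W ω, ss * W ω + N ω)) μ
        = Measure.map φ ((Measure.map W μ).prod (gaussianReal 0 1)) := by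
    intro W hW hind
    rw [← hN, ← (indepFun_iff_map_prod_eq_prod_map_map hW.aemeasurable hNm.aemeasurable).mp hind,
      Measure.map_map hφm (hW.prodMk hNm)]
    rfl
  set j₀ := Measure.map (fun ω => (X₀ ω, Y₀ ω)) μ with hj₀
  set j₁ := Measure.map (fun ω => (X₁ ω, Y₁ ω)) μ with hj₁
  set jZ := Measure.map (fun ω => (Z ω, YZ ω)) μ with hjZ
  have hjZ_mix : jZ = αe • j₀ + βe • j₁ := by
    rw [hjZ, hj₀, hj₁, hjoint Z hZm hindepZ, hjoint X₀ hX₀m hindep₀, hjoint X₁ hX₁m hindep₁,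
      hmix, Measure.add_prod, smul_prod_meas _ _ _ hαet, smul_prod_meas _ _ _ hβet,
      Measure.map_add _ _ hφm, Measure.map_smul, Measure.map_smul]
  -- the error functional
  set F : ℝ × ℝ → ENNReal := fun p => ENNReal.ofReal ((p.1 - g p.2) ^ 2) with hF
  have hFm : Measurable F :=
    ((measurable_fst.sub (hgm.comp measurable_snd)).pow_const 2).ennreal_ofReal
  set A₀ := ∫⁻ p, F p ∂j₀ with hA₀
  set A₁ := ∫⁻ p, F p ∂j₁ with hA₁
  set AZ := ∫⁻ p, F p ∂jZ with hAZ
  have hAZ_split : AZ = αe * A₀ + βe * A₁ := by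
    rw [hAZ, hjZ_mix, lintegral_add_measure, lintegral_smul_measure, lintegral_smul_measure,
      smul_eq_mul, smul_eq_mul]
  -- lintegral over μ for each joint law
  have hlint : ∀ (W Y : Ω → ℝ), Measurable W → Measurable Y →
      (∫⁻ p, F p ∂(Measure.map (fun ω => (W ω, Y ω)) μ))
        = ∫⁻ ω, ENNReal.ofReal ((W ω - g (Y ω)) ^ 2) ∂μ := by
    intro W Y hW hY
    rw [lintegral_map hFm (hW.prodMk hY)]
  -- Bochner integral equals toReal of lintegral
  have hint : ∀ (W Y : Ω → ℝ), Measurable W → Measurable Y →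
      (∫ ω, (W ω - g (Y ω)) ^ 2 ∂μ)
        = (∫⁻ ω, ENNReal.ofReal ((W ω - g (Y ω)) ^ 2) ∂μ).toReal := by
    intro W Y hW hY
    have hm1 : Measurable fun ω => (W ω - g (Y ω)) ^ 2 := (hW.sub (hgm.comp hY)).pow_const 2
    rw [integral_eq_lintegral_of_nonneg_ae (ae_of_all _ fun ω => sq_nonneg _)
      hm1.aestronglyMeasurable]
  -- AZ is finite and computes mmse Z
  have hmmseZ : mmse μ N Z snr = AZ.toReal := by
    rw [mmse]
    have : ∫ ω, (Z ω - (μ[Z|obsSigma N Z snr]) ω) ^ 2 ∂μ = ∫ ω, (Z ω - g (YZ ω)) ^ 2 ∂μ := by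
      refine integral_congr_ae ?_
      filter_upwards [hcondZ] with ω e
      rw [e]
    rw [this, hint Z YZ hZm hYZm, hAZ, hlint Z YZ hZm hYZm]
  have hAZ_fin : AZ ≠ ⊤ := by
    have hdiff : MemLp (fun ω => Z ω - (μ[Z|obsSigma N Z snr]) ω) 2 μ :=
      hZ2.sub (memℒp_two_condexp (hYZm.comap_le) μ hZ2)
    have h2 := hdiff.integrable_sq.2
    rw [HasFiniteIntegral] at h2
    have heq : (∫⁻ ω, ‖(Z ω - (μ[Z|obsSigma N Z snr]) ω) ^ 2‖ₑ ∂μ)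
        = ∫⁻ ω, ENNReal.ofReal ((Z ω - g (YZ ω)) ^ 2) ∂μ := by
      refine lintegral_congr_ae ?_
      filter_upwards [hcondZ] with ω e
      rw [← ofReal_norm, Real.norm_of_nonneg (sq_nonneg _), e]
    rw [heq] at h2
    rw [hAZ, hlint Z YZ hZm hYZm]
    exact h2.ne
  -- component bound
  have hcomp : ∀ (W Y : Ω → ℝ), Measurable W → Measurable Y → MemLp W 2 μ →
      (Y = fun ω => ss * W ω + N ω) →
      (∫⁻ p, F p ∂(Measure.map (fun ω => (W ω, Y ω)) μ)) ≠ ⊤ →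
      mmse μ N W snr ≤ (∫⁻ p, F p ∂(Measure.map (fun ω => (W ω, Y ω)) μ)).toReal := by
    intro W Y hW hY hW2 hYeq hfin
    rw [hlint W Y hW hY] at hfin ⊢
    have hm0 : Measurable fun ω => W ω - g (Y ω) := hW.sub (hgm.comp hY)
    have hdm : MemLp (fun ω => W ω - g (Y ω)) 2 μ := by
      rw [memLp_two_iff_integrable_sq hm0.aestronglyMeasurable]
      refine ⟨(hm0.pow_const 2).aestronglyMeasurable, ?_⟩
      rw [HasFiniteIntegral]
      have : (∫⁻ ω, ‖(W ω - g (Y ω)) ^ 2‖ₑ ∂μ)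
          = ∫⁻ ω, ENNReal.ofReal ((W ω - g (Y ω)) ^ 2) ∂μ := by
        refine lintegral_congr fun ω => ?_
        rw [← ofReal_norm, Real.norm_of_nonneg (sq_nonneg _)]
      rw [this]
      exact hfin.lt_top
    have hgY2 : MemLp (fun ω => g (Y ω)) 2 μ := by
      have h' := hW2.sub hdm
      exact h'.ae_eq (ae_of_all _ fun ω => by simp [Pi.sub_apply])
    have hobs : obsSigma N W snr = MeasurableSpace.comap Y inferInstance := by
      rw [obsSigma, hYeq]
    have hmle : obsSigma N W snr ≤ ‹MeasurableSpace Ω› := by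
      rw [hobs]; exact hY.comap_le
    have hsm : AEStronglyMeasurable[obsSigma N W snr] (fun ω => g (Y ω)) μ := by
      refine StronglyMeasurable.aestronglyMeasurable ?_
      refine Measurable.stronglyMeasurable ?_
      rw [hobs]
      exact hgm.comp (comap_measurable Y)
    have hle := integral_sq_condexp_le hmle μ hW2 hgY2 hsm
    rw [mmse]
    refine hle.trans ?_
    rw [hint W Y hW hY]
  -- finish
  rw [hmmseZ, hAZ_split]
  rcases eq_or_lt_of_le hα0 with h0 | h0
  · -- α = 0
    have hα' : α = 0 := h0.symm
    have : αe = 0 := by rw [hαe, hα', ENNReal.ofReal_zero]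
    rw [hα', this]
    have hβ1 : βe = 1 := by rw [hβe, hα']; norm_num
    simp only [zero_mul, zero_add, sub_zero, one_mul, hβ1]
    have hfin : A₁ ≠ ⊤ := by
      intro hc
      rw [hAZ_split, this, hβ1, hc] at hAZ_fin
      simp at hAZ_fin
    have := hcomp X₁ Y₁ hX₁m hY₁m hX₁2 hY₁def hfin
    rw [← hA₁] at this
    linarith [this]
  · rcases eq_or_lt_of_le hα1 with h1 | h1
    · -- α = 1
      have hβ' : (1:ℝ) - α = 0 := by rw [h1]; ring
      have hβe0 : βe = 0 := by rw [hβe, hβ', ENNReal.ofReal_zero]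
      have hαe1 : αe = 1 := by rw [hαe, h1]; norm_num
      rw [hβ', hβe0, hαe1]
      simp only [zero_mul, add_zero, one_mul]
      have hfin : A₀ ≠ ⊤ := by
        intro hc
        rw [hAZ_split, hαe1, hβe0, hc] at hAZ_fin
        simp at hAZ_fin
      have := hcomp X₀ Y₀ hX₀m hY₀m hX₀2 hY₀def hfin
      rw [← hA₀] at this
      rw [h1, one_mul]
      linarith [this]
    · -- 0 < α < 1
      have hβpos : (0:ℝ) < 1 - α := by linarith
      have hαe0 : αe ≠ 0 := by
        rw [hαe]; simpa using h0
      have hβe0 : βe ≠ 0 := by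
        rw [hβe]; simpa using hβpos
      have hA₀fin : A₀ ≠ ⊤ := by
        intro hc
        rw [hAZ_split, hc, ENNReal.mul_top hαe0] at hAZ_fin
        simp at hAZ_fin
      have hA₁fin : A₁ ≠ ⊤ := by
        intro hc
        rw [hAZ_split, hc, ENNReal.mul_top hβe0] at hAZ_fin
        simp at hAZ_fin
      have hc₀ := hcomp X₀ Y₀ hX₀m hY₀m hX₀2 hY₀def (by rw [← hA₀]; exact hA₀fin)
      have hc₁ := hcomp X₁ Y₁ hX₁m hY₁m hX₁2 hY₁def (by rw [← hA₁]; exact hA₁fin)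
      rw [← hA₀] at hc₀
      rw [← hA₁] at hc₁
      have htr : (αe * A₀ + βe * A₁).toReal = α * A₀.toReal + (1 - α) * A₁.toReal := by
        rw [ENNReal.toReal_add (ENNReal.mul_ne_top hαet hA₀fin) (ENNReal.mul_ne_top hβet hA₁fin),
          ENNReal.toReal_mul, ENNReal.toReal_mul, hαe, hβe, ENNReal.toReal_ofReal hα0,
          ENNReal.toReal_ofReal hβ0]
      rw [htr]
      have t0 : α * mmse μ N X₀ snr ≤ α * A₀.toReal :=
        mul_le_mul_of_nonneg_left hc₀ hα0
      have t1 : (1 - α) * mmse μ N X₁ snr ≤ (1 - α) * A₁.toReal :=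
        mul_le_mul_of_nonneg_left hc₁ hβ0
      linarith
end
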